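/- Let a ∈ R be such that for every prime ideal P of R, the image of a in R/P is strongly π-regular. Then a is strongly π-regular in R. -/
import Mathlib

namespace FSaux

variable {R : Type*} [Ring R]

/-- `a` is strongly π-regular modulo `P`. -/
def Q (a : R) (P : TwoSidedIdeal R) : Prop :=
  ∃ (n m : ℕ) (x y : R), 0 < n ∧ 0 < m ∧
    a ^ n - a ^ (n + 1) * x ∈ P ∧ a ^ m - y * a ^ (m + 1) ∈ P

lemma right_claim {a : R} {P A B : TwoSidedIdeal R}
    (hst : ∀ s ∈ A, ∀ t ∈ B, s * t ∈ P)
    {n : ℕ} {x : R} (hA : a ^ n - a ^ (n + 1) * x ∈ A)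
    {v : R} (hv : v ∈ B) :
    ∀ k : ℕ, a ^ n * v - a ^ (n + k) * x ^ k * v ∈ P := by
  intro k
  induction k with
  | zero => simpa using P.zero_mem
  | succ k ih =>
      have key : (a ^ n - a ^ (n + 1) * x) * x ^ k * v ∈ P :=
        hst _ (A.mul_mem_right _ _ hA) _ hv
      have key2 : a ^ k * ((a ^ n - a ^ (n + 1) * x) * x ^ k * v) ∈ P :=
        P.mul_mem_left _ _ key
      have := P.add_mem ih key2
      have eq1 : a ^ n * v - a ^ (n + k) * x ^ k * v +
          a ^ k * ((a ^ n - a ^ (n + 1) * x) * x ^ k * v)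
          = a ^ n * v - a ^ (n + (k + 1)) * x ^ (k + 1) * v := by
        simp only [pow_add, pow_succ, pow_zero, one_mul]
        noncomm_ring
        all_goals (simp only [neg_smul, one_smul, ← mul_assoc, ← pow_add, ← pow_succ,
          ← pow_succ', Nat.add_comm, Nat.add_left_comm]; try abel)
      rwa [eq1] at this

lemma right_key {a : R} {P A B : TwoSidedIdeal R}
    (hst : ∀ s ∈ A, ∀ t ∈ B, s * t ∈ P)
    {n m : ℕ} {x z : R}
    (hA : a ^ n - a ^ (n + 1) * x ∈ A)
    (hB : a ^ m - a ^ (m + 1) * z ∈ B) :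
    a ^ (n + m) - a ^ (n + m + 1) *
      (z + x ^ (m + 1) * (a ^ m - a ^ (m + 1) * z)) ∈ P := by
  have h1 := right_claim hst hA hB (m + 1)
  have eq1 : a ^ n * (a ^ m - a ^ (m + 1) * z)
      - a ^ (n + (m + 1)) * x ^ (m + 1) * (a ^ m - a ^ (m + 1) * z)
      = a ^ (n + m) - a ^ (n + m + 1) *
        (z + x ^ (m + 1) * (a ^ m - a ^ (m + 1) * z)) := by
    simp only [pow_add, pow_succ, pow_zero, one_mul]
    noncomm_ring
    all_goals (simp only [neg_smul, one_smul, ← mul_assoc, ← pow_add, ← pow_succ,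
      ← pow_succ', Nat.add_comm, Nat.add_left_comm]; try abel)
  rwa [eq1] at h1

lemma left_claim {a : R} {P A B : TwoSidedIdeal R}
    (hst : ∀ s ∈ A, ∀ t ∈ B, s * t ∈ P)
    {m : ℕ} {z : R} (hB : a ^ m - z * a ^ (m + 1) ∈ B)
    {u : R} (hu : u ∈ A) :
    ∀ k : ℕ, u * a ^ m - u * z ^ k * a ^ (m + k) ∈ P := by
  intro k
  induction k with
  | zero => simpa using P.zero_mem
  | succ k ih =>
      have key : (u * z ^ k) * (a ^ m - z * a ^ (m + 1)) ∈ P :=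
        hst _ (A.mul_mem_right _ _ hu) _ hB
      have key2 : (u * z ^ k) * (a ^ m - z * a ^ (m + 1)) * a ^ k ∈ P :=
        P.mul_mem_right _ _ key
      have := P.add_mem ih key2
      have eq1 : u * a ^ m - u * z ^ k * a ^ (m + k) +
          (u * z ^ k) * (a ^ m - z * a ^ (m + 1)) * a ^ k
          = u * a ^ m - u * z ^ (k + 1) * a ^ (m + (k + 1)) := by
        simp only [pow_add, pow_succ, pow_zero, one_mul]
        noncomm_ring
        all_goals (simp only [neg_smul, one_smul, ← mul_assoc, ← pow_add, ← pow_succ,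
          ← pow_succ', Nat.add_comm, Nat.add_left_comm]; try abel)
      rwa [eq1] at this

lemma left_key {a : R} {P A B : TwoSidedIdeal R}
    (hst : ∀ s ∈ A, ∀ t ∈ B, s * t ∈ P)
    {n m : ℕ} {x z : R}
    (hA : a ^ n - x * a ^ (n + 1) ∈ A)
    (hB : a ^ m - z * a ^ (m + 1) ∈ B) :
    a ^ (n + m) -
      (x + (a ^ n - x * a ^ (n + 1)) * z ^ (n + 1)) * a ^ (n + m + 1) ∈ P := by
  have h1 := left_claim hst hB hA (n + 1)
  have eq1 : (a ^ n - x * a ^ (n + 1)) * a ^ m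
      - (a ^ n - x * a ^ (n + 1)) * z ^ (n + 1) * a ^ (m + (n + 1))
      = a ^ (n + m) -
        (x + (a ^ n - x * a ^ (n + 1)) * z ^ (n + 1)) * a ^ (n + m + 1) := by
    simp only [pow_add, pow_succ, pow_zero, one_mul]
    noncomm_ring
    all_goals (simp only [neg_smul, one_smul, ← mul_assoc, ← pow_add, ← pow_succ,
      ← pow_succ', Nat.add_comm, Nat.add_left_comm]; try abel)
  rwa [eq1] at h1

lemma hst_lemma {P I J : TwoSidedIdeal R}
    (hIJ : ∀ i ∈ I, ∀ j ∈ J, i * j ∈ P) :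
    ∀ s ∈ P ⊔ I, ∀ t ∈ P ⊔ J, s * t ∈ P := by
  -- first: every i ∈ I annihilates P ⊔ J into P
  have step1 : ∀ i ∈ I, ∀ t ∈ P ⊔ J, i * t ∈ P := by
    intro i hi
    let K : TwoSidedIdeal R := TwoSidedIdeal.mk' {t | ∀ i ∈ I, i * t ∈ P}
      (fun i _ => by simpa using P.zero_mem)
      (fun {x y} hx hy i hi => by
        rw [mul_add]; exact P.add_mem (hx i hi) (hy i hi))
      (fun {x} hx i hi => by rw [mul_neg]; exact P.neg_mem (hx i hi))
      (fun {x y} hy i hi => by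
        rw [← mul_assoc]; exact hy _ (I.mul_mem_right _ _ hi))
      (fun {x y} hx i hi => by
        rw [← mul_assoc]; exact P.mul_mem_right _ _ (hx i hi))
    have hK : P ⊔ J ≤ K := by
      refine sup_le (fun p hp => ?_) (fun j hj => ?_)
      · rw [TwoSidedIdeal.mem_mk']; exact fun i _ => P.mul_mem_left _ _ hp
      · rw [TwoSidedIdeal.mem_mk']; exact fun i hi => hIJ i hi j hj
    intro t ht
    have := hK ht
    rw [TwoSidedIdeal.mem_mk'] at this
    exact this i hi
  -- second: every s ∈ P ⊔ I annihilates P ⊔ J into P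
  let L : TwoSidedIdeal R := TwoSidedIdeal.mk' {s | ∀ t ∈ P ⊔ J, s * t ∈ P}
    (fun t _ => by simpa using P.zero_mem)
    (fun {x y} hx hy t ht => by
      rw [add_mul]; exact P.add_mem (hx t ht) (hy t ht))
    (fun {x} hx t ht => by rw [neg_mul]; exact P.neg_mem (hx t ht))
    (fun {x y} hy t ht => by
      rw [mul_assoc]; exact P.mul_mem_left _ _ (hy t ht))
    (fun {x y} hx t ht => by
      rw [mul_assoc]; exact hx _ ((P ⊔ J).mul_mem_left _ _ ht))
  have hL : P ⊔ I ≤ L := by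
    refine sup_le (fun p hp => ?_) (fun i hi => ?_)
    · rw [TwoSidedIdeal.mem_mk']; exact fun t _ => P.mul_mem_right _ _ hp
    · rw [TwoSidedIdeal.mem_mk']; exact fun t ht => step1 i hi t ht
  intro s hs t ht
  have := hL hs
  rw [TwoSidedIdeal.mem_mk'] at this
  exact this t ht

lemma Q_top (a : R) : Q a (⊤ : TwoSidedIdeal R) :=
  ⟨1, 1, 0, 0, one_pos, one_pos, trivial, trivial⟩

end FSaux

open FSaux in
/-- Fisher–Snider (element-wise): if the image of `a` is strongly π-regular in
`R/P` for every prime two-sided ideal `P` of `R`, then `a` is strongly π-regular. -/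
theorem stmt_3 {R : Type*} [Ring R] (a : R)
    (h : ∀ P : TwoSidedIdeal R, P ≠ ⊤ →
      (∀ I J : TwoSidedIdeal R, (∀ i ∈ I, ∀ j ∈ J, i * j ∈ P) → I ≤ P ∨ J ≤ P) →
      ∃ (n m : ℕ) (x y : P.ringCon.Quotient), 0 < n ∧ 0 < m ∧
        (RingCon.mk' P.ringCon a) ^ n = (RingCon.mk' P.ringCon a) ^ (n + 1) * x ∧
        (RingCon.mk' P.ringCon a) ^ m = y * (RingCon.mk' P.ringCon a) ^ (m + 1)) :
    ∃ (n m : ℕ) (x y : R), 0 < n ∧ 0 < m ∧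
      a ^ n = a ^ (n + 1) * x ∧ a ^ m = y * a ^ (m + 1) := by
  by_contra hcon
  -- the set of ideals modulo which `a` is NOT strongly π-regular
  set F : Set (TwoSidedIdeal R) := {P | ¬ Q a P} with hF
  have hbot : (⊥ : TwoSidedIdeal R) ∈ F := by
    intro ⟨n, m, x, y, hn, hm, h1, h2⟩
    rw [TwoSidedIdeal.mem_bot, sub_eq_zero] at h1 h2
    exact hcon ⟨n, m, x, y, hn, hm, h1, h2⟩
  -- Zorn's lemma
  obtain ⟨P, -, hPmax⟩ : ∃ P, ⊥ ≤ P ∧ Maximal (· ∈ F) P := by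
    apply zorn_le_nonempty₀ F ?_ ⊥ hbot
    intro c hcF hc y hyc
    refine ⟨TwoSidedIdeal.mk' {r | ∃ P ∈ c, r ∈ P}
      ⟨y, hyc, TwoSidedIdeal.zero_mem y⟩
      (fun {r s} ⟨P1, hP1, hr⟩ ⟨P2, hP2, hs⟩ => ?_)
      (fun {r} ⟨P1, hP1, hr⟩ => ⟨P1, hP1, P1.neg_mem hr⟩)
      (fun {r s} ⟨P1, hP1, hs⟩ => ⟨P1, hP1, P1.mul_mem_left _ _ hs⟩)
      (fun {r s} ⟨P1, hP1, hr⟩ => ⟨P1, hP1, P1.mul_mem_right _ _ hr⟩), ?_, ?_⟩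
    · rcases hc.total hP1 hP2 with hle | hle
      · exact ⟨P2, hP2, P2.add_mem (hle hr) hs⟩
      · exact ⟨P1, hP1, P1.add_mem hr (hle hs)⟩
    · -- the union is in F
      rintro ⟨n, m, x, z, hn, hm, h1, h2⟩
      rw [TwoSidedIdeal.mem_mk'] at h1 h2
      obtain ⟨P1, hP1, hr1⟩ := h1
      obtain ⟨P2, hP2, hr2⟩ := h2
      rcases hc.total hP1 hP2 with hle | hle
      · exact hcF hP2 ⟨n, m, x, z, hn, hm, hle hr1, hr2⟩
      · exact hcF hP1 ⟨n, m, x, z, hn, hm, hr1, hle hr2⟩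
    · intro z hz r hr
      rw [TwoSidedIdeal.mem_mk']
      exact ⟨z, hz, hr⟩
  have hPF : P ∈ F := hPmax.prop
  have hPne : P ≠ ⊤ := fun hPt => hPF (hPt ▸ Q_top a)
  -- primality of P
  have hprime : ∀ I J : TwoSidedIdeal R, (∀ i ∈ I, ∀ j ∈ J, i * j ∈ P) →
      I ≤ P ∨ J ≤ P := by
    intro I J hIJ
    by_contra hc
    push_neg at hc
    obtain ⟨hI, hJ⟩ := hc
    -- both P ⊔ I and P ⊔ J are strictly bigger, so a is s.π.r. modulo them
    have hQI : Q a (P ⊔ I) := by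
      by_contra hq
      exact hI (le_sup_right.trans (hPmax.le_of_ge hq le_sup_left))
    have hQJ : Q a (P ⊔ J) := by
      by_contra hq
      exact hJ (le_sup_right.trans (hPmax.le_of_ge hq le_sup_left))
    obtain ⟨n1, m1, x1, y1, hn1, hm1, hr1, hl1⟩ := hQI
    obtain ⟨n2, m2, x2, y2, hn2, hm2, hr2, hl2⟩ := hQJ
    have hst := hst_lemma (P := P) hIJ
    exact hPF ⟨n1 + n2, m1 + m2, _, _, by positivity, by positivity,
      right_key hst hr1 hr2, left_key hst hl1 hl2⟩
  -- now apply the hypothesis and get a contradiction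
  obtain ⟨n, m, x, y, hn, hm, h1, h2⟩ := h P hPne hprime
  obtain ⟨x0, rfl⟩ := Quot.exists_rep x
  obtain ⟨y0, rfl⟩ := Quot.exists_rep y
  apply hPF
  refine ⟨n, m, x0, y0, hn, hm, ?_, ?_⟩
  · rw [← TwoSidedIdeal.rel_iff, ← RingCon.eq]
    push_cast [← map_pow, ← map_mul] at h1 ⊢
    exact h1
  · rw [← TwoSidedIdeal.rel_iff, ← RingCon.eq]
    push_cast [← map_pow, ← map_mul] at h2 ⊢
    exact h2
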